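/- The function s ↦ (e^s − 1)² / (e^s − 1 − s) is monotone increasing on (0, ∞). -/

import Mathlib

lemma aux1 {s : ℝ} (hs : 0 < s) : 0 < Real.exp s - 1 - s := by
  have := Real.add_one_lt_exp (ne_of_gt hs); linarith

lemma aux_hd (x : ℝ) : HasDerivAt (fun s : ℝ => Real.exp (2*s) - 2*s*Real.exp s - 1)
    (Real.exp (2*x)*2 - (2*Real.exp x + 2*x*Real.exp x)) x := by
  have h1 : HasDerivAt (fun s : ℝ => Real.exp (2*s)) (Real.exp (2*x)*2) x := by
    have := ((hasDerivAt_id x).const_mul 2).exp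
    convert this using 1 <;> simp [mul_comm]
  have h2 : HasDerivAt (fun s : ℝ => 2*s*Real.exp s) (2*Real.exp x + 2*x*Real.exp x) x := by
    have := ((hasDerivAt_id x).const_mul 2).mul (Real.hasDerivAt_exp x)
    convert this using 1 <;> (try simp [mul_comm]) <;> (try rfl) <;> (try (funext s; simp; ring))
  exact (h1.sub h2).sub_const 1

lemma aux2 {s : ℝ} (hs : 0 ≤ s) : 0 ≤ Real.exp (2*s) - 2*s*Real.exp s - 1 := by
  have hmono : MonotoneOn (fun s : ℝ => Real.exp (2*s) - 2*s*Real.exp s - 1) (Set.Ici 0) := by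
    apply monotoneOn_of_deriv_nonneg (convex_Ici 0)
    · fun_prop
    · intro x hx
      exact (aux_hd x).differentiableAt.differentiableWithinAt
    · intro x hx
      rw [interior_Ici] at hx
      rw [(aux_hd x).deriv]
      have h1 : Real.exp (2*x) = Real.exp x * Real.exp x := by rw [two_mul, Real.exp_add]
      have h2 := aux1 hx
      have h3 := Real.exp_pos x
      nlinarith
  have h0 : (fun s : ℝ => Real.exp (2*s) - 2*s*Real.exp s - 1) 0 = 0 := by simp
  have := hmono (Set.self_mem_Ici) hs hs
  simpa [h0] using this

theorem stmt_4 :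
    MonotoneOn (fun s : ℝ => (Real.exp s - 1) ^ 2 / (Real.exp s - 1 - s))
      (Set.Ioi (0 : ℝ)) := by
  have hD : ∀ x : ℝ, 0 < x → HasDerivAt (fun s : ℝ => (Real.exp s - 1) ^ 2 / (Real.exp s - 1 - s))
      ((((2:ℕ) * (Real.exp x - 1) ^ 1 * Real.exp x) * (Real.exp x - 1 - x)
        - (Real.exp x - 1) ^ 2 * (Real.exp x - 1)) / (Real.exp x - 1 - x) ^ 2) x := by
    intro x hx
    have hu : HasDerivAt (fun s : ℝ => (Real.exp s - 1) ^ 2)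
        ((2:ℕ) * (Real.exp x - 1) ^ 1 * Real.exp x) x :=
      ((Real.hasDerivAt_exp x).sub_const 1).pow 2
    have hv : HasDerivAt (fun s : ℝ => Real.exp s - 1 - s) (Real.exp x - 1) x := by
      have := ((Real.hasDerivAt_exp x).sub_const 1).sub (hasDerivAt_id' x)
      exact this
    exact hu.div hv (ne_of_gt (aux1 hx))
  apply monotoneOn_of_deriv_nonneg (convex_Ioi 0)
  · exact ContinuousOn.div (by fun_prop) (by fun_prop)
      (fun x hx => ne_of_gt (aux1 hx))
  · intro x hx
    rw [interior_Ioi] at hx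
    exact (hD x hx).differentiableAt.differentiableWithinAt
  · intro x hx
    rw [interior_Ioi] at hx
    rw [(hD x hx).deriv]
    apply div_nonneg _ (sq_nonneg _)
    have h1 : Real.exp (2*x) = Real.exp x * Real.exp x := by rw [two_mul, Real.exp_add]
    have h2 := aux1 hx
    have h3 := aux2 hx.le
    have h4 : (1:ℝ) < Real.exp x := by
      rw [show (1:ℝ) = Real.exp 0 by simp]; exact Real.exp_lt_exp.mpr hx
    have key : 0 ≤ (Real.exp x - 1) * (Real.exp (2*x) - 2*x*Real.exp x - 1) :=
      mul_nonneg (by linarith) h3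
    push_cast
    nlinarith [key]
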